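/- Let R be a nontrivial commutative local ring of prime characteristic p, let n and k be natural numbers, and let α : Fin n → R be such that α i - α j is a unit of R whenever i ≠ j. Set F = (∏_{j : Fin n} (X - C (α j)))^{p^k} and A = R[X]/⟨F⟩. If an ideal C of A is generated by an idempotent element, then there exists a subset S ⊆ Fin n such that C is the ideal of A generated by the residue of (∏_{j ∈ S} (X - C (α j)))^{p^k}. -/

import Mathlib

open Polynomial

/-- Over a nontrivial commutative local ring of prime characteristic `p`, for `α` with
pairwise unit differences and `F = (∏ j, (X - C (α j)))^(p^k)`, every ideal of
`R[X]/⟨F⟩` generated by an idempotent is the ideal generated by the residue of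
`(∏ j ∈ S, (X - C (α j)))^(p^k)` for some `S ⊆ Fin n`. -/
theorem ideal_of_idempotent_eq_span_prod_pow {R : Type*} [CommRing R] [IsLocalRing R]
    (p : ℕ) (hp : p.Prime) [CharP R p] (n k : ℕ) (α : Fin n → R)
    (hα : ∀ i j : Fin n, i ≠ j → IsUnit (α i - α j))
    (C : Ideal (R[X] ⧸ Ideal.span {(∏ j : Fin n, (X - Polynomial.C (α j))) ^ p ^ k}))
    (hC : ∃ e, e * e = e ∧ C = Ideal.span {e}) :
    ∃ S : Finset (Fin n),
      C = Ideal.span {Ideal.Quotient.mk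
          (Ideal.span {(∏ j : Fin n, (X - Polynomial.C (α j))) ^ p ^ k})
          ((∏ j ∈ S, (X - Polynomial.C (α j))) ^ p ^ k)} := by
  classical
  set q := p ^ k with hq
  have hq0 : q ≠ 0 := pow_ne_zero _ hp.ne_zero
  set f : Fin n → R[X] := fun i => (X - Polynomial.C (α i)) ^ q with hf
  set Ii : Fin n → Ideal R[X] := fun i => Ideal.span {f i} with hIi
  set I : Ideal R[X] := Ideal.span {(∏ j : Fin n, (X - Polynomial.C (α j))) ^ q} with hI
  obtain ⟨e, he, hCe⟩ := hC
  -- coprimality of the factors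
  have hcop : ∀ i j : Fin n, i ≠ j → IsCoprime (f i) (f j) := by
    intro i j hij
    apply IsCoprime.pow
    obtain ⟨u, hu⟩ := hα i j hij
    refine ⟨-Polynomial.C ((u⁻¹ : Rˣ) : R), Polynomial.C ((u⁻¹ : Rˣ) : R), ?_⟩
    have h1 : ((u⁻¹ : Rˣ) : R) * (α i - α j) = 1 := by
      rw [← hu, Units.inv_mul]
    have : -Polynomial.C ((u⁻¹ : Rˣ) : R) * (X - Polynomial.C (α i)) +
        Polynomial.C ((u⁻¹ : Rˣ) : R) * (X - Polynomial.C (α j)) =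
        Polynomial.C (((u⁻¹ : Rˣ) : R) * (α i - α j)) := by
      rw [Polynomial.C_mul, Polynomial.C_sub]
      ring
    rw [this, h1, Polynomial.C_1]
  have hpair : Pairwise (Function.onFun IsCoprime Ii) := by
    intro i j hij
    exact (Ideal.isCoprime_span_singleton_iff _ _).mpr (hcop i j hij)
  have hinf : (⨅ i, Ii i) = I := by
    rw [hI, ← Finset.prod_pow]
    exact Ideal.iInf_span_singleton fun i j hij => hcop i j hij
  -- CRT isomorphism
  set φ : (R[X] ⧸ I) ≃+* ∀ i, R[X] ⧸ Ii i :=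
    (Ideal.quotEquivOfEq hinf.symm).trans (Ideal.quotientInfRingEquivPiQuotient Ii hpair)
    with hφ
  have φ_mk : ∀ (g : R[X]) (i : Fin n), φ (Ideal.Quotient.mk I g) i =
      Ideal.Quotient.mk (Ii i) g := by
    intro g i
    show (Ideal.quotientInfRingEquivPiQuotient Ii hpair)
      ((Ideal.quotEquivOfEq hinf.symm) (Ideal.Quotient.mk I g)) i = _
    rw [Ideal.quotEquivOfEq_mk]
    exact Ideal.quotientInfToPiQuotient_mk' Ii g i
  -- idempotents in local rings are 0 or 1
  have local_idem : ∀ r : R, r * r = r → r = 0 ∨ r = 1 := by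
    intro r hr
    rcases IsLocalRing.isUnit_or_isUnit_one_sub_self r with h | h
    · right
      exact h.mul_left_cancel (by rw [mul_one, hr])
    · left
      refine h.mul_left_cancel ?_
      rw [mul_zero, sub_mul, one_mul, hr, sub_self]
  -- idempotents in each factor are 0 or 1
  have key : ∀ (i : Fin n) (b : R[X] ⧸ Ii i), b * b = b → b = 0 ∨ b = 1 := by
    intro i b hb
    have h0 : ∀ g ∈ Ii i, (Polynomial.evalRingHom (α i)) g = 0 := by
      intro g hg
      obtain ⟨c, rfl⟩ := Ideal.mem_span_singleton.mp hg
      simp [hf, zero_pow hq0]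
    set ev : (R[X] ⧸ Ii i) →+* R := Ideal.Quotient.lift (Ii i) (Polynomial.evalRingHom (α i)) h0
      with hev
    have sub : ∀ b : R[X] ⧸ Ii i, b * b = b → ev b = 0 → b = 0 := by
      intro b hb hb0
      obtain ⟨g, rfl⟩ := Ideal.Quotient.mk_surjective b
      have hroot : Polynomial.eval (α i) g = 0 := hb0
      have hdvd : (X - Polynomial.C (α i)) ∣ g :=
        Polynomial.dvd_iff_isRoot.mpr hroot
      have hpow : (Ideal.Quotient.mk (Ii i) g) ^ q = 0 := by
        rw [← map_pow, Ideal.Quotient.eq_zero_iff_mem]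
        exact Ideal.mem_span_singleton.mpr (pow_dvd_pow_of_dvd hdvd q)
      have hidem : IsIdempotentElem (Ideal.Quotient.mk (Ii i) g) := hb
      calc Ideal.Quotient.mk (Ii i) g = (Ideal.Quotient.mk (Ii i) g) ^ q := by
            rw [show q = (q - 1) + 1 by omega, hidem.pow_succ_eq]
        _ = 0 := hpow
    have hev_idem : ev b * ev b = ev b := by rw [← map_mul, hb]
    rcases local_idem _ hev_idem with h | h
    · exact Or.inl (sub b hb h)
    · right
      have h1b : (1 - b) * (1 - b) = 1 - b := by linear_combination hb
      have : (1 : R[X] ⧸ Ii i) - b = 0 := by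
        apply sub _ h1b
        rw [map_sub, map_one, h, sub_self]
      exact (sub_eq_zero.mp this).symm
  -- components of e
  set E := φ e with hE
  have hEidem : ∀ i, E i * E i = E i := by
    intro i
    rw [← Pi.mul_apply, ← map_mul, he]
  have hEi : ∀ i, E i = 0 ∨ E i = 1 := fun i => key i (E i) (hEidem i)
  set S : Finset (Fin n) := Finset.univ.filter (fun i => E i = 0) with hS
  have hES0 : ∀ i ∈ S, E i = 0 := by
    intro i hi
    exact (Finset.mem_filter.mp hi).2
  have hES1 : ∀ i ∉ S, E i = 1 := by
    intro i hi
    rcases hEi i with h | h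
    · exact absurd (Finset.mem_filter.mpr ⟨Finset.mem_univ i, h⟩) hi
    · exact h
  refine ⟨S, ?_⟩
  set g : R[X] := (∏ j ∈ S, (X - Polynomial.C (α j))) ^ q with hg
  set G := Ideal.Quotient.mk I g with hG
  -- components of G
  have hG0 : ∀ i ∈ S, φ G i = 0 := by
    intro i hi
    rw [hG, φ_mk, Ideal.Quotient.eq_zero_iff_mem]
    refine Ideal.mem_span_singleton.mpr ?_
    exact pow_dvd_pow_of_dvd (Finset.dvd_prod_of_mem _ hi) q
  have hGu : ∀ i ∉ S, IsUnit (φ G i) := by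
    intro i hi
    rw [hG, φ_mk, hg, map_pow, map_prod]
    apply IsUnit.pow
    apply Finset.prod_induction _ IsUnit (fun _ _ => IsUnit.mul) isUnit_one
    intro j hj
    have hij : i ≠ j := fun h => hi (h ▸ hj)
    have hnil : IsNilpotent (Ideal.Quotient.mk (Ii i) (X - Polynomial.C (α i))) := by
      refine ⟨q, ?_⟩
      rw [← map_pow, Ideal.Quotient.eq_zero_iff_mem]
      exact Ideal.mem_span_singleton.mpr dvd_rfl
    have huu : IsUnit (Ideal.Quotient.mk (Ii i) (Polynomial.C (α i - α j))) :=
      (hα i j hij).map ((Ideal.Quotient.mk (Ii i)).comp Polynomial.C)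
    have hsplit : (X - Polynomial.C (α j) : R[X]) =
        Polynomial.C (α i - α j) + (X - Polynomial.C (α i)) := by
      rw [Polynomial.C_sub]; ring
    rw [hsplit, map_add]
    exact hnil.isUnit_add_left_of_commute huu (Commute.all _ _)
  -- mutual divisibility in the product ring
  have hdvd1 : φ e ∣ φ G := by
    refine ⟨φ G, ?_⟩
    funext i
    by_cases hi : i ∈ S
    · rw [Pi.mul_apply]
      show φ G i = E i * φ G i
      rw [hES0 i hi, zero_mul, hG0 i hi]
    · rw [Pi.mul_apply]
      show φ G i = E i * φ G i
      rw [hES1 i hi, one_mul]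
  have hdvd2 : φ G ∣ φ e := by
    refine ⟨fun i => if hi : i ∈ S then 0 else ((hGu i hi).unit⁻¹ : (R[X] ⧸ Ii i)ˣ), ?_⟩
    funext i
    rw [Pi.mul_apply]
    by_cases hi : i ∈ S
    · show E i = φ G i * _
      rw [dif_pos hi, mul_zero, hES0 i hi]
    · show E i = φ G i * _
      rw [dif_neg hi, hES1 i hi, (hGu i hi).mul_val_inv]
  have hdvd1' : e ∣ G := (map_dvd_iff φ).mp hdvd1
  have hdvd2' : G ∣ e := (map_dvd_iff φ).mp hdvd2
  rw [hCe]
  apply le_antisymm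
  · exact Ideal.span_singleton_le_span_singleton.mpr hdvd2'
  · exact Ideal.span_singleton_le_span_singleton.mpr hdvd1'
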